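/- Under the bijection (γ, Q) ↦ γQ from (Γ_∞\Γ) × (Γ\Q_d) to Γ_∞\Q_d for square discriminant d = b² (b > 0): the pair (γ₀, [a,b,0]) with γ₀ = [[0,-1],[1,0]] maps to the Γ_∞-class of [0,-b,a], and the pair (γ_β, [a,b,0]) with β = -b'/a' (a' = a/g, b' = b/g, g = gcd(a,b)) and γ_β = [[*,*],[a',b']] maps to the Γ_∞-class of [0, b, g·ā'], where ā' is the inverse of a' modulo b'. -/

import Mathlib

open scoped Real
open Complex

/-- The special linear group `SL(2, ℤ)`. -/
abbrev SL2Z := Matrix.SpecialLinearGroup (Fin 2) ℤ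

/-- Evaluation of the binary quadratic form `[a,b,c]` at `(x,y)`. -/
def evalQF (Q : ℤ × ℤ × ℤ) (x y : ℤ) : ℤ := Q.1 * x ^ 2 + Q.2.1 * x * y + Q.2.2 * y ^ 2

/-- Discriminant of a binary quadratic form. -/
def discQF (Q : ℤ × ℤ × ℤ) : ℤ := Q.2.1 ^ 2 - 4 * Q.1 * Q.2.2

/-- Action of `SL(2,ℤ)` on binary quadratic forms: `(γQ)(x,y) = Q(Dx - By, -Cx + Ay)`. -/
def actQF (γ : SL2Z) (Q : ℤ × ℤ × ℤ) : ℤ × ℤ × ℤ :=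
  (Q.1 * (γ.1 1 1) ^ 2 - Q.2.1 * (γ.1 1 0) * (γ.1 1 1) + Q.2.2 * (γ.1 1 0) ^ 2,
   -2 * Q.1 * (γ.1 0 1) * (γ.1 1 1) + Q.2.1 * ((γ.1 0 0) * (γ.1 1 1) + (γ.1 0 1) * (γ.1 1 0))
     - 2 * Q.2.2 * (γ.1 0 0) * (γ.1 1 0),
   Q.1 * (γ.1 0 1) ^ 2 - Q.2.1 * (γ.1 0 0) * (γ.1 0 1) + Q.2.2 * (γ.1 0 0) ^ 2)

/-- Two forms are `PSL₂(ℤ)`-equivalent. -/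
def EquivQF (Q Q' : ℤ × ℤ × ℤ) : Prop := ∃ γ : SL2Z, actQF γ Q = Q'

/-- Two forms are `Γ∞`-equivalent. -/
def GammaInfEquivQF (Q Q' : ℤ × ℤ × ℤ) : Prop :=
  ∃ γ : SL2Z, γ.1 1 0 = 0 ∧ actQF γ Q = Q'

lemma actQF_one (Q : ℤ × ℤ × ℤ) : actQF 1 Q = Q := by
  obtain ⟨a, b, c⟩ := Q
  simp [actQF, Matrix.SpecialLinearGroup.coe_one, Matrix.one_apply]

lemma actQF_mul (γ δ : SL2Z) (Q : ℤ × ℤ × ℤ) :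
    actQF (γ * δ) Q = actQF γ (actQF δ Q) := by
  obtain ⟨a, b, c⟩ := Q
  simp only [actQF, Matrix.SpecialLinearGroup.coe_mul, Matrix.mul_apply, Fin.sum_univ_two,
    Prod.mk.injEq]
  refine ⟨by ring, by ring, by ring⟩

lemma SL2Z_inv_c (γ : SL2Z) : (γ⁻¹).1 1 0 = -(γ.1 1 0) := by
  rw [Matrix.SpecialLinearGroup.coe_inv, Matrix.adjugate_fin_two]
  simp

lemma discQF_actQF (γ : SL2Z) (Q : ℤ × ℤ × ℤ) : discQF (actQF γ Q) = discQF Q := by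
  have h := γ.2
  rw [Matrix.det_fin_two] at h
  obtain ⟨a, b, c⟩ := Q
  simp only [discQF, actQF]
  linear_combination (γ.1 0 0 * γ.1 1 1 - γ.1 0 1 * γ.1 1 0 + 1) * (b ^ 2 - 4 * a * c) * h

/-- `Γ∞ ≤ SL(2,ℤ)`: matrices with lower-left entry zero. -/
def GammaInf : Subgroup SL2Z where
  carrier := {γ | γ.1 1 0 = 0}
  one_mem' := by simp [Matrix.SpecialLinearGroup.coe_one, Matrix.one_apply]
  mul_mem' := by
    intro γ δ hγ hδ
    simp only [Set.mem_setOf_eq, Matrix.SpecialLinearGroup.coe_mul, Matrix.mul_apply,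
      Fin.sum_univ_two] at *
    rw [hδ] at *
    simp [hγ, hδ]
  inv_mem' := by
    intro γ hγ
    simp only [Set.mem_setOf_eq] at *
    rw [SL2Z_inv_c, hγ, neg_zero]

/-- Möbius action of `SL(2,ℤ)` on `ℂ`. -/
noncomputable def moeb (γ : SL2Z) (τ : ℂ) : ℂ :=
  ((γ.1 0 0 : ℂ) * τ + (γ.1 0 1 : ℂ)) / ((γ.1 1 0 : ℂ) * τ + (γ.1 1 1 : ℂ))

/-- `e(x) = e^{2πix}`. -/
noncomputable def ee (x : ℝ) : ℂ := Complex.exp (2 * π * Complex.I * x)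

/-- `ε_a`. -/
noncomputable def epsFactor (a : ℕ) : ℂ := if a % 4 = 1 then 1 else Complex.I

/-- The modified Kloosterman sum `K⁺(d, D; 4c)`. -/
noncomputable def KloostermanPlus (d D : ℤ) (c : ℕ) : ℂ :=
  (1 - Complex.I) * (if c % 2 = 0 then 1 else 2) *
    ∑ a ∈ Finset.range (4 * c), if Nat.gcd a (4 * c) = 1 then
      (jacobiSym (4 * c : ℤ) a : ℂ) * epsFactor a *
        ee (((d * a + D * ((a ^ (Nat.totient (4 * c) - 1)) % (4 * c) : ℕ) : ℤ) : ℝ) / (4 * c))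
    else 0

/-- The Kronecker symbol `(D/n)`. -/
def kron (D : ℤ) (n : ℕ) : ℤ :=
  (if D % 2 = 0 then 0 else if D % 8 = 1 ∨ D % 8 = 7 then 1 else -1) ^ (n.factorization 2) *
    jacobiSym D (n / 2 ^ (n.factorization 2))

/-- `D` is a positive fundamental discriminant. -/
def IsFundDisc (D : ℤ) : Prop :=
  0 < D ∧ ((D % 4 = 1 ∧ Squarefree D) ∨
    (D % 4 = 0 ∧ Squarefree (D / 4) ∧ ((D / 4) % 4 = 2 ∨ (D / 4) % 4 = 3)))

/-- The modified Bessel function of the first kind `I_ν`, of a real argument. -/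
noncomputable def besselI (ν : ℂ) (x : ℝ) : ℂ :=
  ∑' k : ℕ, ((x : ℂ) / 2) ^ (ν + 2 * k) / ((Nat.factorial k : ℂ) * Complex.Gamma (ν + k + 1))

/-- The Bessel function of the first kind `J_ν`, of a real argument. -/
noncomputable def besselJ (ν : ℂ) (x : ℝ) : ℂ :=
  ∑' k : ℕ, (-1) ^ k * ((x : ℂ) / 2) ^ (ν + 2 * k) /
    ((Nat.factorial k : ℂ) * Complex.Gamma (ν + k + 1))

/-- The `c`-th term of the Kloosterman–Bessel series `b(d,D,s)`. -/
noncomputable def bterm (d D : ℤ) (s : ℂ) (c : ℕ) : ℂ :=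
  if d * D ≠ 0 then
    KloostermanPlus d D c * (2 : ℂ) ^ (-(3 : ℂ) / 2) * (π : ℂ) *
      ((d * D : ℤ) : ℂ) ^ ((1 : ℂ) / 4) * (c : ℂ)⁻¹ *
      besselJ (2 * s - 1) (π * Real.sqrt ((d * D : ℤ) : ℝ) / c)
  else if d + D ≠ 0 then
    KloostermanPlus d D c * (2 : ℂ) ^ (-(4 : ℂ) * s) * (π : ℂ) ^ (s + 1 / 4) *
      ((d + D : ℤ) : ℂ) ^ (s - 1 / 4) * (c : ℂ) ^ (-2 * s)
  else
    KloostermanPlus 0 0 c * (2 : ℂ) ^ ((1 : ℂ) / 2 - 6 * s) * (π : ℂ) ^ ((1 : ℂ) / 2) *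
      Complex.Gamma (2 * s) * (c : ℂ) ^ (-2 * s)

/-- The coefficient function `b(d, D, s)`. -/
noncomputable def bcoef (d D : ℤ) (s : ℂ) : ℂ := ∑' c : ℕ, bterm d D s (c + 1)

/-- The Dirichlet `L`-function `L_D(s)`. -/
noncomputable def LDir (D : ℤ) (s : ℂ) : ℂ :=
  ∑' n : ℕ, (kron D (n + 1) : ℂ) * ((n + 1 : ℕ) : ℂ) ^ (-s)

/-- `σ_w(m) = Σ_{n ∣ m} n^w`. -/
noncomputable def sigmaC (w : ℂ) (m : ℕ) : ℂ := ∑ n ∈ m.divisors, (n : ℂ) ^ w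

/-- `φ_{m,s}(y) = 2π m^{1/2} y^{1/2} I_{s-1/2}(2πmy)`. -/
noncomputable def phiMS (m : ℕ) (s : ℂ) (y : ℝ) : ℂ :=
  2 * π * Real.sqrt (m * y) * besselI (s - 1 / 2) (2 * π * m * y)

/-- The cosets in `Γ∞\Γ` corresponding to the (rational or infinite) roots of `Q`. -/
def rootCosets (Q : ℤ × ℤ × ℤ) : Set (Quotient (QuotientGroup.rightRel GammaInf)) :=
  {q | ∃ (γ : SL2Z) (r s : ℤ), q = Quotient.mk _ γ ∧ γ.1 1 0 = s ∧ γ.1 1 1 = -r ∧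
    evalQF Q r s = 0}

/-- `Γ`-equivalence as a setoid on forms of discriminant `d`. -/
def sGQ (d : ℤ) : Setoid {Q : ℤ × ℤ × ℤ // discQF Q = d} where
  r Q Q' := ∃ γ : SL2Z, actQF γ Q.val = Q'.val
  iseqv := by
    constructor
    · exact fun Q => ⟨1, actQF_one Q.val⟩
    · rintro Q Q' ⟨γ, hγ⟩
      exact ⟨γ⁻¹, by rw [← hγ, ← actQF_mul, inv_mul_cancel, actQF_one]⟩
    · rintro Q Q' Q'' ⟨γ, hγ⟩ ⟨δ, hδ⟩
      exact ⟨δ * γ, by rw [actQF_mul, hγ, hδ]⟩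

/-- `Γ∞`-equivalence as a setoid on forms of discriminant `d`. -/
def sGIQ (d : ℤ) : Setoid {Q : ℤ × ℤ × ℤ // discQF Q = d} where
  r Q Q' := ∃ γ : SL2Z, γ.1 1 0 = 0 ∧ actQF γ Q.val = Q'.val
  iseqv := by
    constructor
    · exact fun Q => ⟨1, by simp [Matrix.SpecialLinearGroup.coe_one, Matrix.one_apply],
        actQF_one Q.val⟩
    · rintro Q Q' ⟨γ, hc, hγ⟩
      exact ⟨γ⁻¹, by rw [SL2Z_inv_c, hc, neg_zero],
        by rw [← hγ, ← actQF_mul, inv_mul_cancel, actQF_one]⟩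
    · rintro Q Q' Q'' ⟨γ, hcγ, hγ⟩ ⟨δ, hcδ, hδ⟩
      refine ⟨δ * γ, ?_, by rw [actQF_mul, hγ, hδ]⟩
      simp [Matrix.SpecialLinearGroup.coe_mul, Matrix.mul_apply, Fin.sum_univ_two, hcγ, hcδ]

/-- explicit images under the bijection
`(Γ∞\Γ) × (Γ\𝒬_d) → Γ∞\𝒬_d` of the pairs `(γ₀,[a,b,0])` and `(γ_β,[a,b,0])`. -/
theorem stmt17 (b : ℤ) (hb : 0 < b) (a : ℤ) (ha : 0 ≤ a) (hab : a < b)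
    (g : ℤ) (hg : g = Int.gcd a b) (abar' : ℤ) (h1 : 0 ≤ abar') (h2 : abar' < b / g)
    (h3 : (a / g) * abar' ≡ 1 [ZMOD b / g])
    (γ₀ : SL2Z) (hγ₀ : γ₀.1 = !![0, -1; 1, 0]) :
    actQF γ₀ (a, b, 0) = (0, -b, a) ∧
    (∀ γ : SL2Z, γ.1 1 0 = a / g → γ.1 1 1 = b / g →
      GammaInfEquivQF (actQF γ (a, b, 0)) (0, b, g * abar')) := by
  have hga : g ∣ a := hg ▸ Int.gcd_dvd_left a b
  have hgb : g ∣ b := hg ▸ Int.gcd_dvd_right a b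
  have ha' : g * (a / g) = a := Int.mul_ediv_cancel' hga
  have hb' : g * (b / g) = b := Int.mul_ediv_cancel' hgb
  constructor
  · have e1 : γ₀.1 0 0 = 0 := by rw [hγ₀]; simp
    have e2 : γ₀.1 0 1 = -1 := by rw [hγ₀]; simp
    have e3 : γ₀.1 1 0 = 1 := by rw [hγ₀]; simp
    have e4 : γ₀.1 1 1 = 0 := by rw [hγ₀]; norm_num [Matrix.cons_val_one, Matrix.head_cons]
    simp only [actQF, e1, e2, e3, e4, Prod.mk.injEq]
    refine ⟨by ring, by ring, by ring⟩
  · intro γ hc hd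
    have hdet : γ.1 0 0 * γ.1 1 1 - γ.1 0 1 * γ.1 1 0 = 1 := by
      have := γ.2; rwa [Matrix.det_fin_two] at this
    set α := γ.1 0 0 with hα
    set β := γ.1 0 1 with hβ
    rw [hc, hd] at hdet
    have hQ : actQF γ (a, b, 0) = (0, b, a * β ^ 2 - b * α * β) := by
      simp only [actQF, hc, hd, ← hα, ← hβ, Prod.mk.injEq]
      refine ⟨?_, ?_, by ring⟩
      · linear_combination (-(b / g) ^ 2) * ha' + (a / g) * (b / g) * hb'
      · linear_combination 2 * β * (b / g) * ha' - 2 * β * (a / g) * hb' + b * hdet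
    obtain ⟨k, hk⟩ : (b / g) ∣ β * (a / g) + 1 := ⟨α, by linear_combination -hdet⟩
    obtain ⟨l, hl⟩ : (b / g) ∣ (a / g) * abar' - 1 := Int.ModEq.dvd h3.symm
    have key : (b / g) ∣ (a / g) * β ^ 2 - abar' :=
      ⟨(β - abar') * k + β * l, by linear_combination (β - abar') * hk + β * hl⟩
    have k1 : b ∣ g * ((a / g) * β ^ 2 - abar') := by
      rw [← hb']; exact mul_dvd_mul_left g key
    have hdvd : b ∣ a * β ^ 2 - b * α * β - g * abar' := by
      have h5 : a * β ^ 2 - b * α * β - g * abar' =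
          g * ((a / g) * β ^ 2 - abar') + b * (-(α * β)) := by
        linear_combination (-β ^ 2) * ha'
      rw [h5]; exact dvd_add k1 (dvd_mul_right b _)
    rw [hQ]
    set m := (a * β ^ 2 - b * α * β - g * abar') / b with hm
    refine ⟨⟨!![1, m; 0, 1], by simp [Matrix.det_fin_two_of]⟩, by simp, ?_⟩
    have hbm : b * m = a * β ^ 2 - b * α * β - g * abar' := Int.mul_ediv_cancel' hdvd
    have f1 : (!![1, m; 0, 1] : Matrix (Fin 2) (Fin 2) ℤ) 0 0 = 1 := by simp
    have f2 : (!![1, m; 0, 1] : Matrix (Fin 2) (Fin 2) ℤ) 0 1 = m := by simp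
    have f3 : (!![1, m; 0, 1] : Matrix (Fin 2) (Fin 2) ℤ) 1 0 = 0 := by simp
    have f4 : (!![1, m; 0, 1] : Matrix (Fin 2) (Fin 2) ℤ) 1 1 = 1 := by
      norm_num [Matrix.cons_val_one, Matrix.head_cons]
    simp only [actQF, f1, f2, f3, f4, Prod.mk.injEq]
    refine ⟨by ring, by ring, ?_⟩
    linear_combination -hbm
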